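/- There exists a three-element set T ⊆ ℍ such that for every partition ℍ = A₁ ∪ A₂ of the hyperbolic plane into two (not necessarily Borel) pieces, one of the pieces A_i contains a subset S that is unbounded in the hyperbolic metric and satisfies f_c(S) = S for some c ∈ T, where f_c is the point reflection at c. -/

import Mathlib

open UpperHalfPlane Set Matrix MatrixGroups Complex

/-- A point reflection of the hyperbolic plane at `c`: an involutive isometry whose
unique fixed point is `c`. -/
def IsPointReflection (f : ℍ ≃ᵢ ℍ) (c : ℍ) : Prop :=
  (∀ x, f (f x) = x) ∧ (∀ x, f x = x ↔ x = c)

noncomputable def PRmat (α β γ : ℝ) (h : β * γ = -1 - α ^ 2) : SL(2, ℝ) :=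
  ⟨!![α, β; γ, -α], by
    rw [Matrix.det_fin_two_of]
    linear_combination -h⟩

lemma PRmat_00 (α β γ : ℝ) (h : β * γ = -1 - α ^ 2) : (PRmat α β γ h) 0 0 = α := rfl
lemma PRmat_01 (α β γ : ℝ) (h : β * γ = -1 - α ^ 2) : (PRmat α β γ h) 0 1 = β := rfl
lemma PRmat_10 (α β γ : ℝ) (h : β * γ = -1 - α ^ 2) : (PRmat α β γ h) 1 0 = γ := rfl
lemma PRmat_11 (α β γ : ℝ) (h : β * γ = -1 - α ^ 2) : (PRmat α β γ h) 1 1 = -α := rfl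

lemma sl_smul_coe (g : SL(2, ℝ)) (z : ℍ) :
    ((g • z : ℍ) : ℂ) = ((g 0 0 : ℝ) * z + (g 0 1 : ℝ)) / ((g 1 0 : ℝ) * z + (g 1 1 : ℝ)) := by
  rw [UpperHalfPlane.specialLinearGroup_apply, UpperHalfPlane.coe_mk]
  norm_num

lemma denom_ne' (c d : ℝ) (hc : c ≠ 0) (z : ℍ) : (c : ℂ) * z + d ≠ 0 := by
  intro h
  have him : ((c : ℂ) * z + d).im = c * z.im := by
    simp [Complex.add_im, Complex.mul_im]
  rw [h] at him
  have := z.im_pos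
  simp only [Complex.zero_im] at him
  exact absurd him.symm (mul_ne_zero hc (ne_of_gt this))

lemma neg_one_smul' (z : ℍ) : ((-1 : SL(2, ℝ)) • z) = z := by
  apply UpperHalfPlane.ext
  rw [sl_smul_coe]
  have h00 : ((-1 : SL(2, ℝ)) 0 0 : ℝ) = -1 := rfl
  have h01 : ((-1 : SL(2, ℝ)) 0 1 : ℝ) = 0 := by simp
  have h10 : ((-1 : SL(2, ℝ)) 1 0 : ℝ) = 0 := by simp
  have h11 : ((-1 : SL(2, ℝ)) 1 1 : ℝ) = -1 := rfl
  rw [h00, h01, h10, h11]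
  push_cast
  rw [div_eq_iff (by norm_num : (0 : ℂ) * (z : ℂ) + -1 ≠ 0)]
  ring

lemma PRmat_smul_eq_iff (α β γ : ℝ) (hγ : 0 < γ) (h : β * γ = -1 - α ^ 2)
    (c : ℍ) (hc : (c : ℂ) = ((α : ℂ) + Complex.I) / γ) (z : ℍ) :
    (PRmat α β γ h) • z = z ↔ z = c := by
  have hC : (β : ℂ) * γ = -1 - α ^ 2 := by exact_mod_cast congrArg (Complex.ofReal) h
  have hγ0 : (γ : ℂ) ≠ 0 := by exact_mod_cast hγ.ne'
  constructor
  · intro hfix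
    have hco : ((PRmat α β γ h • z : ℍ) : ℂ) = (z : ℂ) := by rw [hfix]
    rw [sl_smul_coe, PRmat_00, PRmat_01, PRmat_10, PRmat_11] at hco
    push_cast at hco
    rw [div_eq_iff (by simpa using denom_ne' γ (-α) hγ.ne' z)] at hco
    have hfact : ((γ : ℂ) * z - (α + Complex.I)) * ((γ : ℂ) * z - (α - Complex.I)) = 0 := by
      linear_combination (-γ : ℂ) * hco + hC - Complex.I_sq
    rcases mul_eq_zero.mp hfact with h1 | h2
    · apply UpperHalfPlane.ext
      rw [hc]
      field_simp
      linear_combination h1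
    · exfalso
      have : ((γ : ℂ) * z - (α - Complex.I)).im = γ * z.im + 1 := by
        simp [Complex.sub_im, Complex.mul_im]
      rw [h2] at this
      simp only [Complex.zero_im] at this
      nlinarith [z.im_pos]
  · intro hz
    subst hz
    apply UpperHalfPlane.ext
    rw [sl_smul_coe, PRmat_00, PRmat_01, PRmat_10, PRmat_11, hc]
    push_cast
    have hd : (γ : ℂ) * (((α : ℂ) + Complex.I) / γ) + -α = Complex.I := by
      field_simp
      ring
    rw [hd, div_eq_div_iff Complex.I_ne_zero hγ0]
    field_simp
    linear_combination hC - Complex.I_sq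

lemma PRmat_sq (α β γ : ℝ) (h : β * γ = -1 - α ^ 2) :
    PRmat α β γ h * PRmat α β γ h = -1 := by
  apply Subtype.ext
  show ((!![α, β; γ, -α] : Matrix (Fin 2) (Fin 2) ℝ) * !![α, β; γ, -α]) = _
  rw [Matrix.mul_fin_two]
  have : (↑(-1 : SL(2, ℝ)) : Matrix (Fin 2) (Fin 2) ℝ) = !![-1, 0; 0, -1] := by
    ext i j
    fin_cases i <;> fin_cases j <;> simp
  rw [this]
  ext i j
  fin_cases i <;> fin_cases j <;>
    simp <;>
    first
      | linear_combination h
      | ring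

noncomputable def ptRefl (α β γ : ℝ) (h : β * γ = -1 - α ^ 2) : ℍ ≃ᵢ ℍ :=
  IsometryEquiv.constSMul (PRmat α β γ h)

lemma ptRefl_apply (α β γ : ℝ) (h : β * γ = -1 - α ^ 2) (z : ℍ) :
    ptRefl α β γ h z = (PRmat α β γ h) • z := rfl


lemma ptRefl_isPR (α β γ : ℝ) (hγ : 0 < γ) (h : β * γ = -1 - α ^ 2)
    (c : ℍ) (hc : (c : ℂ) = ((α : ℂ) + Complex.I) / γ) :
    IsPointReflection (ptRefl α β γ h) c := by
  constructor
  · intro x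
    rw [ptRefl_apply, ptRefl_apply, smul_smul, PRmat_sq, neg_one_smul']
  · intro x
    rw [ptRefl_apply]
    exact PRmat_smul_eq_iff α β γ hγ h c hc x

namespace ThreeCenters

lemma h1 : (-1 : ℝ) * 1 = -1 - 0 ^ 2 := by norm_num
lemma h2 : (-2 : ℝ) * (1 / 2) = -1 - 0 ^ 2 := by norm_num
lemma h3 : (-13 / 3 : ℝ) * (1 / 3) = -1 - (2 / 3) ^ 2 := by norm_num

noncomputable def M1 : SL(2, ℝ) := PRmat 0 (-1) 1 h1
noncomputable def M2 : SL(2, ℝ) := PRmat 0 (-2) (1 / 2) h2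
noncomputable def M3 : SL(2, ℝ) := PRmat (2 / 3) (-13 / 3) (1 / 3) h3

noncomputable def c1 : ℍ := UpperHalfPlane.mk Complex.I (by simp)
noncomputable def c2 : ℍ := UpperHalfPlane.mk (2 * Complex.I) (by simp)
noncomputable def c3 : ℍ := UpperHalfPlane.mk (2 + 3 * Complex.I) (by simp)

lemma hc1 : (c1 : ℂ) = ((0 : ℝ) + Complex.I) / ((1 : ℝ) : ℂ) := by
  simp [c1]
lemma hc2 : (c2 : ℂ) = ((0 : ℝ) + Complex.I) / ((1 / 2 : ℝ) : ℂ) := by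
  simp [c2]
  ring
lemma hc3 : (c3 : ℂ) = ((2 / 3 : ℝ) + Complex.I) / ((1 / 3 : ℝ) : ℂ) := by
  simp only [c3, UpperHalfPlane.coe_mk]
  rw [eq_div_iff (by norm_num : ((1 / 3 : ℝ) : ℂ) ≠ 0)]
  push_cast
  ring

lemma key_rel : PRmat 0 (-1) 1 h1 * (PRmat 0 (-2) (1 / 2) h2 * (PRmat (2 / 3) (-13 / 3) (1 / 3) h3 *
    (PRmat 0 (-1) 1 h1 * (PRmat 0 (-2) (1 / 2) h2 * (PRmat (2 / 3) (-13 / 3) (1 / 3) h3 *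
    (PRmat 0 (-1) 1 h1 * (PRmat 0 (-2) (1 / 2) h2 * PRmat (2 / 3) (-13 / 3) (1 / 3) h3))))))) = -1 := by
  apply Subtype.ext
  simp only [Matrix.SpecialLinearGroup.coe_mul]
  simp only [Matrix.SpecialLinearGroup.coe_mul, PRmat]
  norm_num [Matrix.mul_fin_two]
  ext i j
  fin_cases i <;> fin_cases j <;> simp

end ThreeCenters

namespace ThreeCenters

lemma symmetric_unbounded {A : Set ℍ} (f : ℍ ≃ᵢ ℍ) (hinv : ∀ x, f (f x) = x)
    (Q : Set ℍ) (hQ : ¬ Bornology.IsBounded Q) (hQA : Q ⊆ A) (hQfA : ∀ x ∈ Q, f x ∈ A) :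
    ∃ S ⊆ A, ¬ Bornology.IsBounded S ∧ f '' S = S := by
  refine ⟨Q ∪ f '' Q, ?_, ?_, ?_⟩
  · rintro x (hx | ⟨q, hq, rfl⟩)
    exacts [hQA hx, hQfA q hq]
  · exact fun hb => hQ (hb.subset Set.subset_union_left)
  · rw [Set.image_union, Set.image_image]
    simp only [hinv, Set.image_id']
    exact Set.union_comm _ _

lemma exists_far (B : ℝ) : ∃ x : ℍ, B < dist x c1 := by
  refine ⟨UpperHalfPlane.mk ⟨0, Real.exp (|B| + 1)⟩ (by simpa using Real.exp_pos _), ?_⟩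
  have hre : (UpperHalfPlane.mk ⟨0, Real.exp (|B| + 1)⟩
      (by simpa using Real.exp_pos _) : ℍ).re = c1.re := by
    simp [c1, UpperHalfPlane.re]
  rw [UpperHalfPlane.dist_of_re_eq hre]
  have him : (UpperHalfPlane.mk ⟨0, Real.exp (|B| + 1)⟩
      (by simpa using Real.exp_pos _) : ℍ).im = Real.exp (|B| + 1) := rfl
  have hc1im : c1.im = 1 := by simp [c1, UpperHalfPlane.im]
  rw [him, hc1im, Real.log_exp, Real.log_one, Real.dist_eq, sub_zero]
  calc B ≤ |B| := le_abs_self B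
    _ < |B| + 1 := by linarith
    _ ≤ (|(|B| + 1)| : ℝ) := le_abs_self _

lemma step_ge (f : ℍ ≃ᵢ ℍ) (x : ℍ) : dist x c1 - dist c1 (f c1) ≤ dist (f x) c1 := by
  have h1 : dist (f x) (f c1) = dist x c1 := f.dist_eq x c1
  have h2 := dist_triangle (f x) c1 (f c1)
  linarith

lemma main_case1 (A₁ A₂ : Set ℍ) (hU : A₁ ∪ A₂ = univ) (f : ℍ ≃ᵢ ℍ)
    (hinv : ∀ x, f (f x) = x)
    (hP : ¬ Bornology.IsBounded {x : ℍ | x ∈ A₁ ↔ f x ∈ A₁}) :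
    ∃ A ∈ ({A₁, A₂} : Set (Set ℍ)), ∃ S ⊆ A, ¬ Bornology.IsBounded S ∧ f '' S = S := by
  classical
  have hmem : ∀ x : ℍ, x ∉ A₁ → x ∈ A₂ := by
    intro x hx
    have : x ∈ A₁ ∪ A₂ := hU ▸ Set.mem_univ x
    rw [Set.mem_union] at this
    tauto
  have hsplit : {x : ℍ | x ∈ A₁ ↔ f x ∈ A₁} =
      {x : ℍ | (x ∈ A₁ ↔ f x ∈ A₁) ∧ x ∈ A₁} ∪ {x : ℍ | (x ∈ A₁ ↔ f x ∈ A₁) ∧ x ∉ A₁} := by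
    ext x
    by_cases hx : x ∈ A₁ <;> simp [hx]
  by_cases hQ : Bornology.IsBounded {x : ℍ | (x ∈ A₁ ↔ f x ∈ A₁) ∧ x ∈ A₁}
  · have hQ2 : ¬ Bornology.IsBounded {x : ℍ | (x ∈ A₁ ↔ f x ∈ A₁) ∧ x ∉ A₁} := by
      intro h
      exact hP (hsplit ▸ hQ.union h)
    refine ⟨A₂, by simp, ?_⟩
    refine symmetric_unbounded f hinv _ hQ2 (fun x hx => hmem x hx.2) ?_
    intro x hx
    exact hmem _ (fun hfx => hx.2 (hx.1.mpr hfx))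
  · refine ⟨A₁, by simp, ?_⟩
    exact symmetric_unbounded f hinv _ hQ (fun x hx => hx.2) (fun x hx => hx.1.mp hx.2)

end ThreeCenters


open ThreeCenters

set_option maxHeartbeats 2000000 in
/-- There is a three-element set `T ⊆ ℍ` such that for every partition of `ℍ` into
two pieces, one of the pieces contains an unbounded subset symmetric with respect
to some point of `T`. -/
theorem exists_three_point_central_set_for_two_partitions :
    ∃ T : Set ℍ, T.ncard = 3 ∧
      ∀ A₁ A₂ : Set ℍ, A₁ ∪ A₂ = univ →
        ∃ A ∈ ({A₁, A₂} : Set (Set ℍ)), ∃ c ∈ T, ∃ f : ℍ ≃ᵢ ℍ,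
          IsPointReflection f c ∧
          ∃ S ⊆ A, ¬ Bornology.IsBounded S ∧ f '' S = S := by
  classical
  have hne12 : c1 ≠ c2 := by
    intro h
    have := congrArg (UpperHalfPlane.im) h
    simp [c1, c2, UpperHalfPlane.im] at this
  have hne13 : c1 ≠ c3 := by
    intro h
    have := congrArg (UpperHalfPlane.re) h
    simp [c1, c3, UpperHalfPlane.re] at this
  have hne23 : c2 ≠ c3 := by
    intro h
    have := congrArg (UpperHalfPlane.re) h
    simp [c2, c3] at this
  refine ⟨{c1, c2, c3}, Set.ncard_eq_three.mpr ⟨c1, c2, c3, hne12, hne13, hne23, rfl⟩, ?_⟩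
  intro A₁ A₂ hU
  have hpr1 : IsPointReflection (ptRefl 0 (-1) 1 h1) c1 :=
    ptRefl_isPR 0 (-1) 1 one_pos h1 c1 hc1
  have hpr2 : IsPointReflection (ptRefl 0 (-2) (1 / 2) h2) c2 :=
    ptRefl_isPR 0 (-2) (1 / 2) (by norm_num) h2 c2 hc2
  have hpr3 : IsPointReflection (ptRefl (2 / 3) (-13 / 3) (1 / 3) h3) c3 :=
    ptRefl_isPR (2 / 3) (-13 / 3) (1 / 3) (by norm_num) h3 c3 hc3
  by_cases hB1 : Bornology.IsBounded {x : ℍ | x ∈ A₁ ↔ (ptRefl 0 (-1) 1 h1) x ∈ A₁}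
  case neg =>
    obtain ⟨A, hA, hS⟩ := main_case1 A₁ A₂ hU _ hpr1.1 hB1
    exact ⟨A, hA, c1, by simp, _, hpr1, hS⟩
  by_cases hB2 : Bornology.IsBounded {x : ℍ | x ∈ A₁ ↔ (ptRefl 0 (-2) (1 / 2) h2) x ∈ A₁}
  case neg =>
    obtain ⟨A, hA, hS⟩ := main_case1 A₁ A₂ hU _ hpr2.1 hB2
    exact ⟨A, hA, c2, by simp, _, hpr2, hS⟩
  by_cases hB3 : Bornology.IsBounded
      {x : ℍ | x ∈ A₁ ↔ (ptRefl (2 / 3) (-13 / 3) (1 / 3) h3) x ∈ A₁}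
  case neg =>
    obtain ⟨A, hA, hS⟩ := main_case1 A₁ A₂ hU _ hpr3.1 hB3
    exact ⟨A, hA, c3, by simp, _, hpr3, hS⟩
  exfalso
  obtain ⟨r1, hr1⟩ := hB1.subset_closedBall c1
  obtain ⟨r2, hr2⟩ := hB2.subset_closedBall c1
  obtain ⟨r3, hr3⟩ := hB3.subset_closedBall c1
  obtain ⟨R, hRr1, hRr2, hRr3⟩ : ∃ R : ℝ, r1 ≤ R ∧ r2 ≤ R ∧ r3 ≤ R :=
    ⟨max r1 (max r2 r3), le_max_left _ _, le_trans (le_max_left _ _) (le_max_right _ _),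
      le_trans (le_max_right _ _) (le_max_right _ _)⟩
  have flip1 : ∀ x : ℍ, R < dist x c1 → ((ptRefl 0 (-1) 1 h1) x ∈ A₁ ↔ ¬ x ∈ A₁) := by
    intro x hx
    have hnot : ¬(x ∈ A₁ ↔ (ptRefl 0 (-1) 1 h1) x ∈ A₁) := by
      intro hmem
      linarith [Metric.mem_closedBall.mp (hr1 hmem)]
    tauto
  have flip2 : ∀ x : ℍ, R < dist x c1 → ((ptRefl 0 (-2) (1 / 2) h2) x ∈ A₁ ↔ ¬ x ∈ A₁) := by
    intro x hx
    have hnot : ¬(x ∈ A₁ ↔ (ptRefl 0 (-2) (1 / 2) h2) x ∈ A₁) := by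
      intro hmem
      linarith [Metric.mem_closedBall.mp (hr2 hmem)]
    tauto
  have flip3 : ∀ x : ℍ,
      R < dist x c1 → ((ptRefl (2 / 3) (-13 / 3) (1 / 3) h3) x ∈ A₁ ↔ ¬ x ∈ A₁) := by
    intro x hx
    have hnot : ¬(x ∈ A₁ ↔ (ptRefl (2 / 3) (-13 / 3) (1 / 3) h3) x ∈ A₁) := by
      intro hmem
      linarith [Metric.mem_closedBall.mp (hr3 hmem)]
    tauto
  obtain ⟨D, hD1, hD2, hD3, hD0⟩ : ∃ D : ℝ, dist c1 ((ptRefl 0 (-1) 1 h1) c1) ≤ D ∧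
      dist c1 ((ptRefl 0 (-2) (1 / 2) h2) c1) ≤ D ∧
      dist c1 ((ptRefl (2 / 3) (-13 / 3) (1 / 3) h3) c1) ≤ D ∧ 0 ≤ D := by
    refine ⟨dist c1 ((ptRefl 0 (-1) 1 h1) c1) + dist c1 ((ptRefl 0 (-2) (1 / 2) h2) c1) +
      dist c1 ((ptRefl (2 / 3) (-13 / 3) (1 / 3) h3) c1), ?_, ?_, ?_, ?_⟩ <;>
      [skip; skip; skip; skip] <;>
      nlinarith [dist_nonneg (x := c1) (y := (ptRefl 0 (-1) 1 h1) c1),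
        dist_nonneg (x := c1) (y := (ptRefl 0 (-2) (1 / 2) h2) c1),
        dist_nonneg (x := c1) (y := (ptRefl (2 / 3) (-13 / 3) (1 / 3) h3) c1)]
  obtain ⟨x0, hx0⟩ := exists_far (R + 9 * D)
  -- the nine-step chain
  set T1 := ptRefl (2 / 3) (-13 / 3) (1 / 3) h3 x0 with hT1
  set T2 := ptRefl 0 (-2) (1 / 2) h2 T1 with hT2
  set T3 := ptRefl 0 (-1) 1 h1 T2 with hT3
  set T4 := ptRefl (2 / 3) (-13 / 3) (1 / 3) h3 T3 with hT4
  set T5 := ptRefl 0 (-2) (1 / 2) h2 T4 with hT5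
  set T6 := ptRefl 0 (-1) 1 h1 T5 with hT6
  set T7 := ptRefl (2 / 3) (-13 / 3) (1 / 3) h3 T6 with hT7
  set T8 := ptRefl 0 (-2) (1 / 2) h2 T7 with hT8
  have hd1 : R + 8 * D < dist T1 c1 := by
    have := step_ge (ptRefl (2 / 3) (-13 / 3) (1 / 3) h3) x0; rw [← hT1] at this; linarith
  have hd2 : R + 7 * D < dist T2 c1 := by
    have := step_ge (ptRefl 0 (-2) (1 / 2) h2) T1; rw [← hT2] at this; linarith
  have hd3 : R + 6 * D < dist T3 c1 := by
    have := step_ge (ptRefl 0 (-1) 1 h1) T2; rw [← hT3] at this; linarith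
  have hd4 : R + 5 * D < dist T4 c1 := by
    have := step_ge (ptRefl (2 / 3) (-13 / 3) (1 / 3) h3) T3; rw [← hT4] at this; linarith
  have hd5 : R + 4 * D < dist T5 c1 := by
    have := step_ge (ptRefl 0 (-2) (1 / 2) h2) T4; rw [← hT5] at this; linarith
  have hd6 : R + 3 * D < dist T6 c1 := by
    have := step_ge (ptRefl 0 (-1) 1 h1) T5; rw [← hT6] at this; linarith
  have hd7 : R + 2 * D < dist T7 c1 := by
    have := step_ge (ptRefl (2 / 3) (-13 / 3) (1 / 3) h3) T6; rw [← hT7] at this; linarith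
  have hd8 : R + 1 * D < dist T8 c1 := by
    have := step_ge (ptRefl 0 (-2) (1 / 2) h2) T7; rw [← hT8] at this; linarith
  have e1 := flip3 x0 (by linarith)
  rw [← hT1] at e1
  have e2 := flip2 T1 (by linarith)
  rw [← hT2] at e2
  have e3 := flip1 T2 (by linarith)
  rw [← hT3] at e3
  have e4 := flip3 T3 (by linarith)
  rw [← hT4] at e4
  have e5 := flip2 T4 (by linarith)
  rw [← hT5] at e5
  have e6 := flip1 T5 (by linarith)
  rw [← hT6] at e6
  have e7 := flip3 T6 (by linarith)
  rw [← hT7] at e7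
  have e8 := flip2 T7 (by linarith)
  rw [← hT8] at e8
  have e9 := flip1 T8 (by linarith)
  have hrel : ptRefl 0 (-1) 1 h1 T8 = x0 := by
    rw [hT8, hT7, hT6, hT5, hT4, hT3, hT2, hT1]
    simp only [ptRefl_apply, smul_smul]
    rw [key_rel]
    exact neg_one_smul' x0
  rw [hrel] at e9
  clear_value T1 T2 T3 T4 T5 T6 T7 T8
  clear hrel hT1 hT2 hT3 hT4 hT5 hT6 hT7 hT8 hd1 hd2 hd3 hd4 hd5 hd6 hd7 hd8
  tauto
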